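/- With 𝒮 = ℬ𝒜⁻¹ℬᵀ the Schur complement as above, the LOD basis function φ^loc = (1 − 𝒞^loc)b_T satisfies 𝒜φ^loc = ℬᵀ𝒮⁻¹𝟙_T; in particular, the distributional source g := −div(A∇φ^loc) = 𝒮⁻¹𝟙_T is a piecewise constant function in P⁰(𝒯_{H,ω}) ⊂ L²(ω). -/

import Mathlib

/-- with `𝒮 = ℬ𝒜⁻¹ℬᵀ` the Schur complement (notation as in Statement 17,
with `G = 𝒜⁻¹ℬᵀ` characterized by `a_ω(Gp, v) = (p, ℬv)`), the LOD basis function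
`φ^loc = (1 − 𝒞^loc) b_T` — characterized as the energy-minimizer subject to
`ℬ φ^loc = 𝟙_T`, i.e. `ℬφ^loc = 𝟙_T` and `a_ω(φ^loc, w) = 0` for all `w ∈ ker ℬ` —
satisfies `𝒜 φ^loc = ℬᵀ 𝒮⁻¹ 𝟙_T`: writing `λ = 𝒮⁻¹𝟙_T` (i.e. `𝒮λ = ℬ(Gλ) = 𝟙_T`),
we have `a_ω(φ^loc, v) = (λ, ℬv)_{L²}` for all `v`; in particular the distributional
source `g = −div(A∇φ^loc) = 𝒮⁻¹𝟙_T = λ` is a piecewise constant function in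
`P⁰(𝒯_{H,ω}) ⊂ L²(ω)`. -/
theorem statement18
    (V F : Type*)
    [NormedAddCommGroup V] [InnerProductSpace ℝ V]
    [NormedAddCommGroup F] [InnerProductSpace ℝ F]
    (B : V →L[ℝ] F) (G : F →ₗ[ℝ] V)
    (hG : ∀ (p : F) (v : V), (inner ℝ (G p) v : ℝ) = (inner ℝ p (B v) : ℝ))
    (oneT lam : F) (φloc : V)
    (hBφ : B φloc = oneT)
    (horth : ∀ w : V, B w = 0 → (inner ℝ φloc w : ℝ) = 0)
    (hlam : B (G lam) = oneT) :
    ∀ v : V, (inner ℝ φloc v : ℝ) = (inner ℝ lam (B v) : ℝ) := by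
  have hBd : B (φloc - G lam) = 0 := by
    rw [map_sub, hBφ, hlam, sub_self]
  have h1 : (inner ℝ φloc (φloc - G lam) : ℝ) = 0 := horth _ hBd
  have h2 : (inner ℝ (G lam) (φloc - G lam) : ℝ) = 0 := by
    rw [hG, hBd, inner_zero_right]
  have hd : φloc - G lam = 0 := by
    have : (inner ℝ (φloc - G lam) (φloc - G lam) : ℝ) = 0 := by
      rw [inner_sub_left, h1, h2, sub_zero]
    exact inner_self_eq_zero.mp this
  have hφ : φloc = G lam := by
    have := sub_eq_zero.mp hd; exact this
  intro v
  rw [hφ, hG]
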